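/- If G has maximum degree at most 2, then every linear coloring of G is also a centered coloring. -/

import Mathlib

/-- A linear coloring: every path in `G` contains a vertex whose color appears
exactly once on the path. -/
def IsLinearColoring {V C : Type*} [DecidableEq C] (G : SimpleGraph V) (ψ : V → C) : Prop :=
  ∀ ⦃u v : V⦄ (p : G.Walk u v), p.IsPath →
    ∃ w ∈ p.support, (p.support.map ψ).count (ψ w) = 1

/-- A centered coloring: every nonempty vertex set inducing a connected subgraph
contains a vertex whose color appears exactly once in the set. -/
def IsCenteredColoring {V C : Type*} [DecidableEq C] (G : SimpleGraph V) (φ : V → C) : Prop :=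
  ∀ S : Finset V, S.Nonempty → (G.induce (S : Set V)).Connected →
    ∃ w ∈ S, (S.filter (fun x => φ x = φ w)).card = 1

/-- The linear coloring number: minimum number of colors of a linear coloring. -/
noncomputable def chiLin {V : Type*} (G : SimpleGraph V) : ℕ :=
  sInf {k | ∃ ψ : V → Fin k, IsLinearColoring G ψ}

/-- The centered coloring number: minimum number of colors of a centered coloring. -/
noncomputable def chiCen {V : Type*} (G : SimpleGraph V) : ℕ :=
  sInf {k | ∃ φ : V → Fin k, IsCenteredColoring G φ}

/-- A treedepth decomposition of `G`: a rooted forest on the vertices of `G`,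
given by its ancestor relation `anc` (a partial order whose down-sets are chains),
such that every edge of `G` joins an ancestor-descendant pair. -/
structure TreedepthDecomp {V : Type*} (G : SimpleGraph V) where
  anc : V → V → Prop
  refl : ∀ v, anc v v
  antisymm : ∀ u v, anc u v → anc v u → u = v
  trans : ∀ u v w, anc u v → anc v w → anc u w
  chain : ∀ u v w, anc u w → anc v w → anc u v ∨ anc v u
  edge : ∀ u v, G.Adj u v → anc u v ∨ anc v u

/-- The decomposition has depth at most `k`: every ancestor-descendant chain has
at most `k` vertices. -/
def TreedepthDecomp.depthLE {V : Type*} {G : SimpleGraph V} (d : TreedepthDecomp G)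
    (k : ℕ) : Prop :=
  ∀ s : Finset V, (∀ a ∈ s, ∀ b ∈ s, d.anc a b ∨ d.anc b a) → s.card ≤ k

/-- The treedepth of `G`: minimum depth of a treedepth decomposition. -/
noncomputable def treedepth {V : Type*} (G : SimpleGraph V) : ℕ :=
  sInf {k | ∃ d : TreedepthDecomp G, d.depthLE k}



open SimpleGraph

lemma count_map_eq_length_filter {α C : Type*} [DecidableEq C] (ψ : α → C) (c : C) (l : List α) :
    (l.map ψ).count c = (l.filter (fun x => ψ x = c)).length := by
  induction l with
  | nil => simp
  | cons a l ih =>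
    by_cases h : ψ a = c <;> simp [List.count_cons, h, ih]

lemma exists_crossing {W : Type*} (H : SimpleGraph W) (T : List W) :
    ∀ {x a : W} (_w : H.Walk x a), x ∉ T → a ∈ T →
      ∃ u v, H.Adj u v ∧ u ∉ T ∧ v ∈ T := by
  intro x a w
  induction w with
  | nil => exact fun hx ha => absurd ha hx
  | @cons x y a h q ih =>
    intro hx ha
    by_cases hy : y ∈ T
    · exact ⟨x, y, h, hx, hy⟩
    · exact ih hy ha

lemma internal_two_neighbors {W : Type*} {H : SimpleGraph W} :
    ∀ {a b : W} (p : H.Walk a b), p.IsPath → ∀ {y}, y ∈ p.support → y ≠ a → y ≠ b →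
      ∃ s t, s ≠ t ∧ H.Adj y s ∧ H.Adj y t ∧ s ∈ p.support ∧ t ∈ p.support := by
  intro a b p
  induction p with
  | nil =>
    intro _ y hy hya _
    simp only [SimpleGraph.Walk.support_nil, List.mem_singleton] at hy
    exact absurd hy hya
  | @cons a c b h q ih =>
    intro hp y hy hya hyb
    rw [SimpleGraph.Walk.support_cons, List.mem_cons] at hy
    rcases hy with rfl | hy
    · exact absurd rfl hya
    by_cases hyc : y = c
    · subst hyc
      cases q with
      | nil => exact absurd rfl hyb
      | @cons c d b h2 r =>
        refine ⟨a, d, ?_, h.symm, h2, ?_, ?_⟩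
        · rintro rfl
          exact (SimpleGraph.Walk.cons_isPath_iff _ _ |>.mp hp).2
            (by simp [SimpleGraph.Walk.support_cons])
        · simp [SimpleGraph.Walk.support_cons]
        · simp [SimpleGraph.Walk.support_cons]
    · obtain ⟨s, t, hst, h1, h2, hs, ht⟩ := ih hp.of_cons hy hyc hyb
      exact ⟨s, t, hst, h1, h2, by simp [SimpleGraph.Walk.support_cons, hs],
        by simp [SimpleGraph.Walk.support_cons, ht]⟩

lemma ham_path {W : Type*} [Fintype W] [Nonempty W] (H : SimpleGraph W)
    [DecidableRel H.Adj] (hc : H.Connected) (hd : ∀ v, H.degree v ≤ 2) :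
    ∃ (a b : W) (p : H.Walk a b), p.IsPath ∧ ∀ w, w ∈ p.support := by
  classical
  set L : Set ℕ := {n | ∃ (a b : W) (p : H.Walk a b), p.IsPath ∧ p.length = n} with hL
  have hne : L.Nonempty := ⟨0, Classical.arbitrary W, Classical.arbitrary W, Walk.nil, by simp, rfl⟩
  have hbdd : BddAbove L := by
    refine ⟨Fintype.card W, ?_⟩
    rintro n ⟨a, b, p, hp, rfl⟩
    exact (hp.length_lt).le
  obtain ⟨a, b, p, hp, hlen⟩ := Nat.sSup_mem hne hbdd
  have hmax : ∀ {a' b' : W} (q : H.Walk a' b'), q.IsPath → q.length ≤ p.length := by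
    intro a' b' q hq
    rw [hlen]
    exact le_csSup hbdd ⟨a', b', q, hq, rfl⟩
  refine ⟨a, b, p, hp, ?_⟩
  by_contra hcon
  push_neg at hcon
  obtain ⟨x, hx⟩ := hcon
  obtain ⟨w0⟩ := hc.preconnected x a
  obtain ⟨z, y, hzy, hz, hy⟩ := exists_crossing H p.support w0 hx p.start_mem_support
  by_cases hya : y = a
  · subst hya
    have : (Walk.cons hzy p).IsPath := (Walk.cons_isPath_iff _ _).mpr ⟨hp, hz⟩
    have := hmax _ this
    simp at this
  by_cases hyb : y = b
  · subst hyb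
    have : (Walk.cons hzy p.reverse).IsPath :=
      (Walk.cons_isPath_iff _ _).mpr ⟨hp.reverse, by simpa using hz⟩
    have := hmax _ this
    simp at this
  · obtain ⟨s, t, hst, h1, h2, hs, ht⟩ := internal_two_neighbors p hp hy hya hyb
    have hdeg : ({s, t, z} : Finset W) ⊆ H.neighborFinset y := by
      intro u hu
      simp only [Finset.mem_insert, Finset.mem_singleton] at hu
      rcases hu with rfl | rfl | rfl
      · simpa using h1
      · simpa using h2
      · simpa using hzy.symm
    have hcard : ({s, t, z} : Finset W).card = 3 := by
      have hsz : s ≠ z := fun h => hz (h ▸ hs)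
      have htz : t ≠ z := fun h => hz (h ▸ ht)
      rw [Finset.card_insert_of_notMem (by simp [hst, hsz]),
        Finset.card_insert_of_notMem (by simp [htz])]
      rfl
    have h3 := Finset.card_le_card hdeg
    rw [hcard, H.card_neighborFinset_eq_degree] at h3
    have := hd y
    omega

lemma filter_toFinset_card {α : Type*} [DecidableEq α] (l : List α) (hl : l.Nodup)
    (q : α → Prop) [DecidablePred q] :
    (l.toFinset.filter q).card = (l.filter (fun x => q x)).length := by
  have h : (l.filter (fun x => q x)).toFinset = l.toFinset.filter q := by
    ext x; simp [List.mem_filter]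
  rw [← h, List.toFinset_card_of_nodup (hl.filter _)]


/-- If `G` has maximum degree at most `2`, then every linear
coloring of `G` is also a centered coloring. -/
theorem linear_is_centered_of_maxDegree_le_two {V : Type*} [Fintype V]
    (G : SimpleGraph V) [DecidableRel G.Adj] (hΔ : G.maxDegree ≤ 2)
    {C : Type*} [DecidableEq C] (ψ : V → C) (h : IsLinearColoring G ψ) :
    IsCenteredColoring G ψ := by
  intro S hS hconn
  classical
  set H : SimpleGraph (↑(S : Set V)) := G.induce (S : Set V) with hH
  haveI : Nonempty ↑(S : Set V) := ⟨⟨hS.choose, by simpa using hS.choose_spec⟩⟩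
  haveI : DecidableRel H.Adj := fun a b => by rw [hH]; exact (inferInstance : Decidable (G.Adj a.1 b.1))
  have hdeg : ∀ v : ↑(S : Set V), H.degree v ≤ 2 := by
    intro v
    have h1 : H.degree v ≤ G.degree v.1 := by
      rw [← SimpleGraph.card_neighborFinset_eq_degree, ← SimpleGraph.card_neighborFinset_eq_degree]
      apply Finset.card_le_card_of_injOn Subtype.val
      · intro u hu
        rw [Finset.mem_coe, SimpleGraph.mem_neighborFinset] at hu ⊢
        exact hu
      · exact Subtype.val_injective.injOn
    exact h1.trans ((G.degree_le_maxDegree _).trans hΔ)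
  obtain ⟨a, b, p, hp, hall⟩ := ham_path H hconn hdeg
  let f : H →g G := ⟨Subtype.val, fun {x y} hxy => hxy⟩
  have hfinj : Function.Injective f := Subtype.val_injective
  let p' := p.map f
  have hp' : p'.IsPath := SimpleGraph.Walk.map_isPath_of_injective hfinj hp
  have hsupp : p'.support = p.support.map Subtype.val := SimpleGraph.Walk.support_map f p
  have hfin : p'.support.toFinset = S := by
    ext v
    rw [List.mem_toFinset, hsupp, List.mem_map]
    constructor
    · rintro ⟨u, _, rfl⟩; exact u.2
    · intro hv; exact ⟨⟨v, hv⟩, hall _, rfl⟩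
  obtain ⟨w, hw, hcount⟩ := h p' hp'
  refine ⟨w, by rw [← hfin]; exact List.mem_toFinset.mpr hw, ?_⟩
  rw [← hfin, filter_toFinset_card _ hp'.support_nodup, ← count_map_eq_length_filter]
  exact hcount
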